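/- Suppose w_1, …, w_k ∈ W satisfy Δ⁺ = Φ_{w_1} ⊔ Φ_{w_2} ⊔ ⋯ ⊔ Φ_{w_k} (disjoint union), and suppose u ∈ W satisfies w_i ≤ w_i u in the Bruhat order for every i = 1, …, k. Then for any dominant integral weight λ, the element μ_λ := λ − uλ is neither a root nor a nonzero scalar multiple of a root. -/

import Mathlib

open RealInnerProductSpace

noncomputable section

variable {V : Type*} [NormedAddCommGroup V] [InnerProductSpace ℝ V] [FiniteDimensional ℝ V]

/-- Orthogonal reflection of `V` in the hyperplane orthogonal to `α`. -/
def reflRoot (α : V) : V ≃ₗᵢ[ℝ] V := (ℝ ∙ α)ᗮ.reflection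

/-- The inversion set `Φ_w = w⁻¹Δ⁻ ∩ Δ⁺ = {α ∈ Δ⁺ | w α ∈ Δ⁻}`, where `Δ⁻ = -Δ⁺`
(so `w α ∈ Δ⁻ ↔ -(w α) ∈ Δ⁺`). -/
def invSet (pos : Set V) (w : V ≃ₗᵢ[ℝ] V) : Set V := {α | α ∈ pos ∧ -(w α) ∈ pos}

/-- The length of `w`, i.e. the number of inversions of `w`. -/
def invLen (pos : Set V) (w : V ≃ₗᵢ[ℝ] V) : ℕ := (invSet pos w).ncard

/-- The Bruhat order on the Weyl group: the reflexive-transitive closure of the relation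
`x ⋖ x * s_α` (right multiplication by the reflection in a root `α`) whenever the length
(= number of inversions) increases. -/
def bruhatLE (roots pos : Set V) : (V ≃ₗᵢ[ℝ] V) → (V ≃ₗᵢ[ℝ] V) → Prop :=
  Relation.ReflTransGen
    (fun x y => (∃ α ∈ roots, y = x * reflRoot α) ∧ invLen pos x < invLen pos y)

/-- A reduced crystallographic root system in the real inner product space `V`, together with
a fixed choice of positive roots `pos` (the negative roots being `-pos`). -/
structure RootSystemCtx (V : Type*) [NormedAddCommGroup V] [InnerProductSpace ℝ V]
    [FiniteDimensional ℝ V] where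
  /-- the set of roots `Δ` -/
  roots : Set V
  /-- the set of positive roots `Δ⁺` -/
  pos : Set V
  finite : roots.Finite
  nonzero : ∀ α ∈ roots, α ≠ (0 : V)
  /-- reduced: the only multiples of a root which are roots are `±α` -/
  reduced : ∀ α ∈ roots, ∀ t : ℝ, t • α ∈ roots → t = 1 ∨ t = -1
  /-- crystallographic: `⟨β, α∨⟩ ∈ ℤ` for all roots `α`, `β` -/
  crystallographic : ∀ α ∈ roots, ∀ β ∈ roots, ∃ z : ℤ, 2 * ⟪β, α⟫ / ⟪α, α⟫ = (z : ℝ)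
  /-- the set of roots is stable under the reflection in each root -/
  reflect_mem : ∀ α ∈ roots, ∀ β ∈ roots, reflRoot α β ∈ roots
  pos_subset : pos ⊆ roots
  /-- every root is positive or negative -/
  mem_pos_or : ∀ α ∈ roots, α ∈ pos ∨ -α ∈ pos
  /-- no root is both positive and negative -/
  not_pos_and_neg : ∀ α ∈ pos, -α ∉ pos
  /-- positivity is closed under addition -/
  pos_add : ∀ α ∈ pos, ∀ β ∈ pos, α + β ∈ roots → α + β ∈ pos

namespace RootSystemCtx

variable {V : Type*} [NormedAddCommGroup V] [InnerProductSpace ℝ V] [FiniteDimensional ℝ V]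

/-- The Weyl group `W`: the subgroup of the isometry group of `V` generated by the
reflections in the roots. -/
def weylGroup (C : RootSystemCtx V) : Subgroup (V ≃ₗᵢ[ℝ] V) :=
  Subgroup.closure {g | ∃ α ∈ C.roots, g = reflRoot α}

/-- The simple roots: the positive roots which are not the sum of two positive roots. -/
def simpleRoots (C : RootSystemCtx V) : Set V :=
  {α ∈ C.pos | ¬ ∃ β ∈ C.pos, ∃ γ ∈ C.pos, α = β + γ}

/-- A weight `l` is dominant integral if `⟨l, α∨⟩` is a nonnegative integer for every
simple root `α`. -/
def IsDominant (C : RootSystemCtx V) (l : V) : Prop :=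
  ∀ α ∈ C.simpleRoots, ∃ k : ℕ, 2 * ⟪l, α⟫ / ⟪α, α⟫ = (k : ℝ)

end RootSystemCtx

section Aux

variable {V : Type*} [NormedAddCommGroup V] [InnerProductSpace ℝ V] [FiniteDimensional ℝ V]

lemma reflRoot_apply (α x : V) :
    reflRoot α x = x - (2 * ⟪x, α⟫ / ⟪α, α⟫) • α := by
  rw [reflRoot, Submodule.reflection_orthogonal_apply, Submodule.reflection_singleton_apply]
  rw [real_inner_self_eq_norm_sq, real_inner_comm]
  rw [neg_sub, two_smul]
  match_scalars
  · ring
  · simp only [RCLike.ofReal_real_eq_id, id_eq]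
    ring

lemma reflRoot_neg (α : V) : reflRoot (-α) = reflRoot α := by
  refine LinearIsometryEquiv.ext fun x => ?_
  rw [reflRoot_apply, reflRoot_apply]
  rw [inner_neg_right, inner_neg_neg, smul_neg]
  rw [show (2 * -⟪x, α⟫ / ⟪α, α⟫ : ℝ) = -(2 * ⟪x, α⟫ / ⟪α, α⟫) by ring, neg_smul, neg_neg]

lemma reflRoot_self {α : V} (hα : α ≠ 0) : reflRoot α α = -α := by
  rw [reflRoot_apply]
  have h : ⟪α, α⟫ ≠ (0:ℝ) := inner_self_ne_zero.mpr hα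
  rw [mul_div_assoc, div_self h, mul_one, two_smul]
  abel

lemma reflRoot_invol (α : V) (x : V) : reflRoot α (reflRoot α x) = x :=
  Submodule.reflection_involutive ((ℝ ∙ α)ᗮ) x

lemma reflRoot_mul_self (α : V) : reflRoot α * reflRoot α = 1 :=
  LinearIsometryEquiv.ext fun x => reflRoot_invol α x

namespace RootSystemCtx

variable (C : RootSystemCtx V)

lemma inner_self_pos_of_root {α : V} (hα : α ∈ C.roots) : (0:ℝ) < ⟪α, α⟫ := by
  have h := C.nonzero α hα
  rw [real_inner_self_eq_norm_sq]
  exact pow_pos (norm_pos_iff.mpr h) 2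

/-- If two roots have negative inner product and are not opposite, their sum is a root. -/
lemma root_add {α β : V} (hα : α ∈ C.roots) (hβ : β ∈ C.roots)
    (hin : ⟪α, β⟫ < 0) (hne : α ≠ -β) : α + β ∈ C.roots := by
  obtain ⟨m, hm⟩ := C.crystallographic β hβ α hα
  obtain ⟨n, hn⟩ := C.crystallographic α hα β hβ
  have hα0 : α ≠ 0 := C.nonzero α hα
  have hβ0 : β ≠ 0 := C.nonzero β hβ
  have hαα : (0:ℝ) < ⟪α, α⟫ := C.inner_self_pos_of_root hα
  have hββ : (0:ℝ) < ⟪β, β⟫ := C.inner_self_pos_of_root hβ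
  have hinβα : ⟪β, α⟫ < 0 := by rwa [real_inner_comm]
  have hmneg : (m:ℝ) < 0 := by
    rw [← hm]; exact div_neg_of_neg_of_pos (by linarith) hββ
  have hnneg : (n:ℝ) < 0 := by
    rw [← hn]; exact div_neg_of_neg_of_pos (by linarith) hαα
  have hCS : ⟪α, β⟫ ^ 2 < ⟪α, α⟫ * ⟪β, β⟫ := by
    have hle : |⟪α, β⟫| ≤ ‖α‖ * ‖β‖ := abs_real_inner_le_norm α β
    have hne2 : |⟪α, β⟫| ≠ ‖α‖ * ‖β‖ := by
      intro habs
      have h1 : ⟪α, -β⟫ = ‖α‖ * ‖(-β : V)‖ := by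
        rw [inner_neg_right, norm_neg]
        rw [abs_of_neg hin] at habs
        linarith
      have h2 := inner_eq_norm_mul_iff_real.mp h1
      rw [norm_neg] at h2
      -- h2 : ‖β‖ • α = ‖α‖ • (-β)
      have hnorm : ‖α‖ ≠ 0 := norm_ne_zero_iff.mpr hα0
      have hβval : β = (-(‖β‖ / ‖α‖)) • α := by
        have h3 : ‖α‖ • β = -(‖β‖ • α) := by
          rw [h2, smul_neg, neg_neg]
        calc β = ‖α‖⁻¹ • (‖α‖ • β) := by rw [inv_smul_smul₀ hnorm]
        _ = ‖α‖⁻¹ • -(‖β‖ • α) := by rw [h3]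
        _ = (-(‖β‖ / ‖α‖)) • α := by
            rw [smul_neg, smul_smul, ← neg_smul, div_eq_inv_mul]
      have := C.reduced α hα (-(‖β‖ / ‖α‖)) (by rw [← hβval]; exact hβ)
      rcases this with h | h
      · have hq : (0:ℝ) < ‖β‖ / ‖α‖ := by
          apply div_pos (norm_pos_iff.mpr hβ0) (norm_pos_iff.mpr hα0)
        linarith
      · apply hne
        rw [hβval, h, neg_one_smul, neg_neg]
    have hlt : |⟪α, β⟫| < ‖α‖ * ‖β‖ := lt_of_le_of_ne hle hne2
    have hsq := mul_self_lt_mul_self (abs_nonneg _) hlt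
    calc ⟪α, β⟫ ^ 2 = |⟪α, β⟫| * |⟪α, β⟫| := by rw [abs_mul_abs_self]; ring
    _ < (‖α‖ * ‖β‖) * (‖α‖ * ‖β‖) := hsq
    _ = ⟪α, α⟫ * ⟪β, β⟫ := by
        rw [real_inner_self_eq_norm_mul_norm, real_inner_self_eq_norm_mul_norm]; ring
  have hprod : (m:ℝ) * n < 4 := by
    have hmn : (m:ℝ) * n = 4 * ⟪α, β⟫ ^ 2 / (⟪α, α⟫ * ⟪β, β⟫) := by
      rw [← hm, ← hn, real_inner_comm β α]
      field_simp
      ring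
    rw [hmn, div_lt_iff₀ (by positivity)]
    nlinarith
  have hm1 : m < 0 := by exact_mod_cast hmneg
  have hn1 : n < 0 := by exact_mod_cast hnneg
  have hcase : m = -1 ∨ n = -1 := by
    by_contra hcon
    push_neg at hcon
    have hm2 : m ≤ -2 := by omega
    have hn2 : n ≤ -2 := by omega
    have h4 : (4:ℝ) ≤ (m:ℝ) * n := by
      have : (4:ℤ) ≤ m * n := by nlinarith
      exact_mod_cast this
    linarith
  rcases hcase with h | h
  · have hmem := C.reflect_mem β hβ α hα
    rw [reflRoot_apply, hm, h] at hmem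
    push_cast at hmem
    rw [neg_one_smul, sub_neg_eq_add] at hmem
    exact hmem
  · have hmem := C.reflect_mem α hα β hβ
    rw [reflRoot_apply, hn, h] at hmem
    push_cast at hmem
    rw [neg_one_smul, sub_neg_eq_add] at hmem
    rwa [add_comm]

/-- A "closed" subset of the positive roots. -/
def Closed (P' : Set V) : Prop :=
  P' ⊆ C.pos ∧ ∀ a ∈ P', ∀ b ∈ P', a + b ∈ C.roots → a + b ∈ P'

lemma inner_list_sum (a : V) (L : List V) (h : ∀ x ∈ L, 0 ≤ ⟪a, x⟫) : 0 ≤ ⟪a, L.sum⟫ := by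
  induction L with
  | nil => simp
  | cons x L ih =>
      rw [List.sum_cons, inner_add_right]
      have h1 := h x List.mem_cons_self
      have h2 := ih (fun y hy => h y (List.mem_cons_of_mem x hy))
      linarith

/-- No nonempty list of elements of a closed subset of positive roots sums to zero. -/
lemma list_sum_ne_zero {P' : Set V} (hcl : C.Closed P') :
    ∀ (L : List V), (∀ x ∈ L, x ∈ P') → L ≠ [] → L.sum ≠ 0 := by
  classical
  obtain ⟨hsub, hadd⟩ := hcl
  suffices H : ∀ (n : ℕ) (L : List V), L.length = n → (∀ x ∈ L, x ∈ P') → L ≠ [] → L.sum ≠ 0 by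
    exact fun L => H L.length L rfl
  intro n
  induction n using Nat.strong_induction_on with
  | _ n ih =>
    intro L hlen hmem hne hsum
    match L, hne with
    | γ0 :: L', _ =>
      have hγ0 : γ0 ∈ P' := hmem γ0 List.mem_cons_self
      have hγ0root : γ0 ∈ C.roots := C.pos_subset (hsub hγ0)
      have hγ00 : (0:ℝ) < ⟪γ0, γ0⟫ := C.inner_self_pos_of_root hγ0root
      rw [List.sum_cons] at hsum
      have hinner : ⟪γ0, L'.sum⟫ = -⟪γ0, γ0⟫ := by
        have h0 : ⟪γ0, γ0 + L'.sum⟫ = 0 := by rw [hsum, inner_zero_right]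
        rw [inner_add_right] at h0
        linarith
      have hexists : ∃ γ1 ∈ L', ⟪γ0, γ1⟫ < 0 := by
        by_contra hcon
        push_neg at hcon
        have := inner_list_sum γ0 L' hcon
        rw [hinner] at this
        linarith
      obtain ⟨γ1, hγ1L, hγ01⟩ := hexists
      have hγ1 : γ1 ∈ P' := hmem γ1 (List.mem_cons_of_mem _ hγ1L)
      have hγ1root : γ1 ∈ C.roots := C.pos_subset (hsub hγ1)
      have hne01 : γ0 ≠ -γ1 := by
        intro h
        exact C.not_pos_and_neg γ1 (hsub hγ1) (h ▸ hsub hγ0)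
      have hδroot : γ0 + γ1 ∈ C.roots := C.root_add hγ0root hγ1root hγ01 hne01
      have hδ : γ0 + γ1 ∈ P' := hadd γ0 hγ0 γ1 hγ1 hδroot
      set M : List V := (γ0 + γ1) :: L'.erase γ1 with hM
      have hMlen : M.length < n := by
        rw [hM, List.length_cons, List.length_erase_of_mem hγ1L]
        rw [← hlen, List.length_cons]
        have : 0 < L'.length := List.length_pos_of_mem hγ1L
        omega
      have hMmem : ∀ x ∈ M, x ∈ P' := by
        intro x hx
        rw [hM, List.mem_cons] at hx
        rcases hx with h | h
        · rwa [h]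
        · exact hmem x (List.mem_cons_of_mem _ (List.mem_of_mem_erase h))
      have hMsum : M.sum = 0 := by
        rw [hM, List.sum_cons]
        have hperm : List.Perm L' (γ1 :: L'.erase γ1) := List.perm_cons_erase hγ1L
        have h5 : L'.sum = γ1 + (L'.erase γ1).sum := by
          rw [hperm.sum_eq, List.sum_cons]
        rw [h5] at hsum
        rw [← hsum]
        abel
      exact ih M.length hMlen M rfl hMmem (by simp [hM]) hMsum

/-- A closed nonempty subset of positive roots has a "maximal" element. -/
lemma exists_maximal {P' : Set V} (hcl : C.Closed P') (hne : P'.Nonempty) :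
    ∃ γ ∈ P', ∀ δ ∈ P', γ + δ ∉ P' := by
  by_contra hcon
  push_neg at hcon
  have hfin : P'.Finite := C.finite.subset (hcl.1.trans C.pos_subset)
  have hstep : ∀ x : P', ∃ d : P', (x:V) + d ∈ P' := by
    intro x
    obtain ⟨δ, hδ, hδ2⟩ := hcon x.1 x.2
    exact ⟨⟨δ, hδ⟩, hδ2⟩
  choose d hd using hstep
  obtain ⟨x0, hx0⟩ := hne
  have : Finite P' := hfin.to_subtype
  set f : P' → P' := fun p => ⟨(p:V) + d p, hd p⟩ with hf
  set s : ℕ → P' := fun n => f^[n] ⟨x0, hx0⟩ with hs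
  have hsucc : ∀ n, (s (n+1) : V) = (s n : V) + d (s n) := by
    intro n
    have h8 : s (n+1) = f (s n) := by
      rw [hs]
      simp [Function.iterate_succ_apply']
    rw [h8, hf]
  have main : ∀ i j : ℕ, i < j → s i = s j → False := by
    intro i j hlt hseq
    set L : List V := (List.range (j - i)).map (fun l => (d (s (i + l)) : V)) with hL
    have hLmem : ∀ x ∈ L, x ∈ P' := by
      intro x hx
      simp only [hL, List.mem_map, List.mem_range] at hx
      obtain ⟨l, _, rfl⟩ := hx
      exact (d (s (i + l))).2
    have htel : ∀ m : ℕ, (s (i + m) : V) = (s i : V) +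
        (((List.range m).map (fun l => (d (s (i + l)) : V))).sum) := by
      intro m
      induction m with
      | zero => simp
      | succ m ihm =>
          rw [show i + (m + 1) = (i + m) + 1 by omega, hsucc (i + m), ihm, List.range_succ,
            List.map_append, List.sum_append]
          simp [add_assoc]
    have hLsum : L.sum = 0 := by
      have h1 := htel (j - i)
      rw [show i + (j - i) = j by omega, ← hseq] at h1
      exact (left_eq_add.mp h1)
    have hLne : L ≠ [] := by
      simp only [hL, ne_eq, List.map_eq_nil_iff, List.range_eq_nil]
      omega
    exact C.list_sum_ne_zero ⟨hcl.1, hcl.2⟩ L hLmem hLne hLsum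
  obtain ⟨i, j, hij, hseq⟩ := Finite.exists_ne_map_eq_of_infinite s
  rcases hij.lt_or_gt with hlt | hlt
  · exact main i j hlt hseq
  · exact main j i hlt hseq.symm

/-- Existence of a vector pairing positively with everything in a closed set. -/
lemma exists_functional_aux : ∀ (n : ℕ) (P' : Set V), C.Closed P' → P'.ncard = n →
    ∃ v : V, ∀ γ ∈ P', 0 < ⟪γ, v⟫ := by
  intro n
  induction n using Nat.strong_induction_on with
  | _ n ih =>
    intro P' hcl hcard
    have hfin : P'.Finite := C.finite.subset (hcl.1.trans C.pos_subset)
    rcases P'.eq_empty_or_nonempty with rfl | hne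
    · exact ⟨0, by simp⟩
    obtain ⟨γs, hγs, hmax⟩ := C.exists_maximal hcl hne
    have hγsroot : γs ∈ C.roots := C.pos_subset (hcl.1 hγs)
    have hnonneg : ∀ γ ∈ P', 0 ≤ ⟪γs, γ⟫ := by
      intro γ hγ
      by_contra hlt
      push_neg at hlt
      have hγroot : γ ∈ C.roots := C.pos_subset (hcl.1 hγ)
      have hneop : γs ≠ -γ := fun h =>
        C.not_pos_and_neg γ (hcl.1 hγ) (h ▸ hcl.1 hγs)
      have hroot := C.root_add hγsroot hγroot hlt hneop
      exact hmax γ hγ (hcl.2 γs hγs γ hγ hroot)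
    set P0 : Set V := {γ ∈ P' | ⟪γs, γ⟫ = 0} with hP0
    have hP0cl : C.Closed P0 := by
      constructor
      · exact fun x hx => hcl.1 hx.1
      · intro a ha b hb hab
        refine ⟨hcl.2 a ha.1 b hb.1 hab, ?_⟩
        rw [inner_add_right, ha.2, hb.2]; ring
    have hP0lt : P0.ncard < n := by
      rw [← hcard]
      apply Set.ncard_lt_ncard _ hfin
      constructor
      · exact fun x hx => hx.1
      · intro hsub2
        have h6 := (hsub2 hγs).2
        have h7 := C.inner_self_pos_of_root hγsroot
        linarith
    obtain ⟨v0, hv0⟩ := ih P0.ncard hP0lt P0 hP0cl rfl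
    set Q : Set V := P' \ P0 with hQ
    have hQpos : ∀ γ ∈ Q, 0 < ⟪γ, γs⟫ := by
      intro γ hγ
      rw [real_inner_comm]
      rcases lt_or_eq_of_le (hnonneg γ hγ.1) with h | h
      · exact h
      · exact absurd ⟨hγ.1, h.symm⟩ hγ.2
    set S : Set ℝ := (fun γ => -⟪γ, v0⟫ / ⟪γ, γs⟫) '' Q with hS
    have hSfin : S.Finite := (hfin.subset Set.diff_subset).image _
    set N : ℝ := sSup S + 1 with hN
    refine ⟨N • γs + v0, ?_⟩
    intro γ hγ
    rw [inner_add_right, real_inner_smul_right]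
    by_cases h0 : γ ∈ P0
    · have hz : ⟪γ, γs⟫ = 0 := by rw [real_inner_comm]; exact h0.2
      rw [hz, mul_zero, zero_add]
      exact hv0 γ h0
    · have hγQ : γ ∈ Q := ⟨hγ, h0⟩
      have hmem : -⟪γ, v0⟫ / ⟪γ, γs⟫ ∈ S := ⟨γ, hγQ, rfl⟩
      have hle : -⟪γ, v0⟫ / ⟪γ, γs⟫ ≤ sSup S := le_csSup hSfin.bddAbove hmem
      have hpos := hQpos γ hγQ
      have hltN : -⟪γ, v0⟫ / ⟪γ, γs⟫ < N := by rw [hN]; linarith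
      have h2 : -⟪γ, v0⟫ < N * ⟪γ, γs⟫ := by
        calc -⟪γ, v0⟫ = (-⟪γ, v0⟫ / ⟪γ, γs⟫) * ⟪γ, γs⟫ := by field_simp
        _ < N * ⟪γ, γs⟫ := mul_lt_mul_of_pos_right hltN hpos
      linarith

/-- There is a vector pairing positively with every positive root. -/
lemma exists_pos_functional : ∃ v : V, ∀ γ ∈ C.pos, 0 < ⟪γ, v⟫ :=
  C.exists_functional_aux C.pos.ncard C.pos
    ⟨le_refl _, fun a ha b hb hab => C.pos_add a ha b hb hab⟩ rfl

end RootSystemCtx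
end Aux

section Aux2

variable {V : Type*} [NormedAddCommGroup V] [InnerProductSpace ℝ V] [FiniteDimensional ℝ V]

namespace RootSystemCtx

variable (C : RootSystemCtx V)

/-- A dominant weight pairs nonnegatively with every positive root. -/
lemma dominant_inner_nonneg {v : V} (hv : ∀ γ ∈ C.pos, 0 < ⟪γ, v⟫)
    {l : V} (hl : C.IsDominant l) : ∀ β ∈ C.pos, 0 ≤ ⟪l, β⟫ := by
  suffices H : ∀ (n : ℕ) (β : V), β ∈ C.pos →
      ({γ ∈ C.pos | ⟪γ, v⟫ < ⟪β, v⟫}).ncard = n → 0 ≤ ⟪l, β⟫ by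
    exact fun β hβ => H _ β hβ rfl
  have hposfin : C.pos.Finite := C.finite.subset C.pos_subset
  intro n
  induction n using Nat.strong_induction_on with
  | _ n ih =>
    intro β hβ hcard
    by_cases hsimple : β ∈ C.simpleRoots
    · obtain ⟨k, hk⟩ := hl β hsimple
      have hββ : (0:ℝ) < ⟪β, β⟫ := C.inner_self_pos_of_root (C.pos_subset hβ)
      have h2 : 2 * ⟪l, β⟫ = (k:ℝ) * ⟪β, β⟫ := by
        field_simp at hk
        linarith
      have hk0 : (0:ℝ) ≤ (k:ℝ) := Nat.cast_nonneg k
      nlinarith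
    · have hdecomp : ∃ β1 ∈ C.pos, ∃ β2 ∈ C.pos, β = β1 + β2 := by
        by_contra hcon
        exact hsimple ⟨hβ, hcon⟩
      obtain ⟨β1, hβ1, β2, hβ2, rfl⟩ := hdecomp
      have hv1 : 0 < ⟪β1, v⟫ := hv β1 hβ1
      have hv2 : 0 < ⟪β2, v⟫ := hv β2 hβ2
      have hsum : ⟪β1 + β2, v⟫ = ⟪β1, v⟫ + ⟪β2, v⟫ := inner_add_left _ _ _
      have key : ∀ β' , β' ∈ C.pos → ⟪β', v⟫ < ⟪β1 + β2, v⟫ → 0 ≤ ⟪l, β'⟫ := by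
        intro β' hβ' hlt
        refine ih ({γ ∈ C.pos | ⟪γ, v⟫ < ⟪β', v⟫}).ncard ?_ β' hβ' rfl
        rw [← hcard]
        apply Set.ncard_lt_ncard
        · constructor
          · intro x hx
            exact ⟨hx.1, lt_trans hx.2 hlt⟩
          · intro hsub
            have := (hsub ⟨hβ', hlt⟩).2
            linarith
        · exact hposfin.subset (fun x hx => hx.1)
      have h1 := key β1 hβ1 (by rw [hsum]; linarith)
      have h2 := key β2 hβ2 (by rw [hsum]; linarith)
      rw [inner_add_right]
      linarith

/-- Elements of the Weyl group map roots to roots. -/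
lemma weyl_maps_roots {g : V ≃ₗᵢ[ℝ] V} (hg : g ∈ C.weylGroup) :
    ∀ γ ∈ C.roots, g γ ∈ C.roots := by
  have H : (∀ γ ∈ C.roots, g γ ∈ C.roots) ∧ (∀ γ ∈ C.roots, g⁻¹ γ ∈ C.roots) := by
    refine Subgroup.closure_induction ?_ ?_ ?_ ?_ hg
    · rintro x ⟨α, hα, rfl⟩
      have hinv : (reflRoot α)⁻¹ = reflRoot α :=
        inv_eq_of_mul_eq_one_right (reflRoot_mul_self α)
      constructor
      · exact fun γ hγ => C.reflect_mem α hα γ hγ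
      · rw [hinv]
        exact fun γ hγ => C.reflect_mem α hα γ hγ
    · constructor <;> exact fun γ hγ => hγ
    · intro x y hx hy hxih hyih
      constructor
      · intro γ hγ
        exact hxih.1 _ (hyih.1 γ hγ)
      · intro γ hγ
        rw [mul_inv_rev]
        exact hyih.2 _ (hxih.2 γ hγ)
    · intro x hx hxih
      refine ⟨hxih.2, ?_⟩
      rw [inv_inv]
      exact hxih.1
  exact H.1

/-- Key counting lemma: if `w β ∈ Δ⁺` for a positive root `β`, then right-multiplying by the
reflection in `β` increases the inversion number. -/
lemma invLen_lt_of_pos {v : V} (hv : ∀ γ ∈ C.pos, 0 < ⟪γ, v⟫)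
    {w : V ≃ₗᵢ[ℝ] V} (hw : ∀ γ ∈ C.roots, w γ ∈ C.roots)
    {β : V} (hβ : β ∈ C.pos) (hwβ : w β ∈ C.pos) :
    invLen C.pos w < invLen C.pos (w * reflRoot β) := by
  have hβroot : β ∈ C.roots := C.pos_subset hβ
  have hβ0 : β ≠ 0 := C.nonzero β hβroot
  set t : V ≃ₗᵢ[ℝ] V := reflRoot β with hts
  have htβ : t β = -β := reflRoot_self hβ0
  have htt : ∀ x, t (t x) = x := fun x => reflRoot_invol β x
  have htroots : ∀ γ ∈ C.roots, t γ ∈ C.roots := fun γ hγ => C.reflect_mem β hβroot γ hγ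
  have hposfin : C.pos.Finite := C.finite.subset C.pos_subset
  -- the three pieces of Δ⁺
  set E : Set V := {γ ∈ C.pos | t γ ∈ C.pos} with hE
  set D : Set V := {γ | (γ ∈ C.pos ∧ -(t γ) ∈ C.pos) ∧ γ ≠ β} with hD
  set w' : V ≃ₗᵢ[ℝ] V := w * t with hw's
  have hw'γ : ∀ γ, w' γ = w (t γ) := fun γ => rfl
  have hw'roots : ∀ γ ∈ C.roots, w' γ ∈ C.roots := fun γ hγ => hw _ (htroots γ hγ)
  -- dichotomy for roots
  have dich : ∀ γ ∈ C.roots, (γ ∈ C.pos ↔ ¬(-γ ∈ C.pos)) := by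
    intro γ hγ
    constructor
    · exact fun h => C.not_pos_and_neg γ h
    · intro h
      rcases C.mem_pos_or γ hγ with h1 | h1
      · exact h1
      · exact absurd h1 h
  -- partition of a positive root
  have hsplit : ∀ γ ∈ C.pos, γ = β ∨ γ ∈ E ∨ γ ∈ D := by
    intro γ hγ
    by_cases hγβ : γ = β
    · exact Or.inl hγβ
    rcases C.mem_pos_or (t γ) (htroots γ (C.pos_subset hγ)) with h | h
    · exact Or.inr (Or.inl ⟨hγ, h⟩)
    · exact Or.inr (Or.inr ⟨⟨hγ, h⟩, hγβ⟩)
  have hβnotE : β ∉ E := by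
    intro h
    have h2 := h.2
    rw [htβ] at h2
    exact C.not_pos_and_neg β hβ h2
  have hβnotD : β ∉ D := fun h => h.2 rfl
  have hED : ∀ γ, γ ∈ E → γ ∈ D → False := by
    intro γ h1 h2
    exact C.not_pos_and_neg _ h1.2 h2.1.2
  -- β not in Φ(w), β in Φ(w')
  have hβΦw : β ∉ invSet C.pos w := by
    intro h
    exact C.not_pos_and_neg _ hwβ h.2
  have hβΦw' : β ∈ invSet C.pos w' := by
    refine ⟨hβ, ?_⟩
    rw [hw'γ, htβ, map_neg, neg_neg]
    exact hwβ
  -- involution σ on D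
  set σ : V → V := fun γ => -(t γ) with hσ
  have hσinj : Function.Injective σ := by
    intro a b hab
    have := neg_injective hab
    exact t.injective this
  have htσ : ∀ γ, t (σ γ) = -γ := by
    intro γ
    show t (-(t γ)) = -γ
    rw [map_neg, htt]
  have hσD : ∀ γ ∈ D, σ γ ∈ D := by
    intro γ hγD
    obtain ⟨⟨hγP, hγtP⟩, hγβ⟩ := hγD
    refine ⟨⟨hγtP, ?_⟩, ?_⟩
    · show -(t (σ γ)) ∈ C.pos
      rw [htσ, neg_neg]
      exact hγP
    · intro h
      apply hγβ
      have h3 : t (σ γ) = t β := by rw [h]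
      rw [htσ, htβ] at h3
      exact neg_injective h3
  have hσσ : ∀ γ, σ (σ γ) = γ := by
    intro γ
    show -(t (σ γ)) = γ
    rw [htσ, neg_neg]
  have hwσ : ∀ γ, -(w (σ γ)) = w (t γ) := by
    intro γ
    show -(w (-(t γ))) = w (t γ)
    rw [map_neg, neg_neg]
  have hw'σ : ∀ γ, -(w' (σ γ)) = w γ := by
    intro γ
    rw [hw'γ, htσ, map_neg, neg_neg]
  -- γ + σ γ is a positive multiple of β for γ ∈ D
  have hc : ∀ γ ∈ D, ∃ c : ℝ, 0 < c ∧ γ + σ γ = c • β := by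
    intro γ hγD
    refine ⟨2 * ⟪γ, β⟫ / ⟪β, β⟫, ?_, ?_⟩
    · have h1 : 0 < ⟪γ + σ γ, v⟫ := by
        rw [inner_add_left]
        have := hv γ hγD.1.1
        have := hv (σ γ) (hσD γ hγD).1.1
        linarith
      have h2 : γ + σ γ = (2 * ⟪γ, β⟫ / ⟪β, β⟫) • β := by
        show γ + -(reflRoot β γ) = _
        rw [reflRoot_apply]
        abel
      rw [h2, real_inner_smul_left] at h1
      have hβv := hv β hβ
      by_contra hcon
      push_neg at hcon
      nlinarith
    · show γ + -(reflRoot β γ) = _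
      rw [reflRoot_apply]
      abel
  -- Φ(w') ∩ E = t '' (Φ(w) ∩ E)
  have hT1 : invSet C.pos w' ∩ E = (fun γ => t γ) '' (invSet C.pos w ∩ E) := by
    ext γ
    constructor
    · rintro ⟨⟨hγP, hγw'⟩, hγE⟩
      refine ⟨t γ, ⟨⟨hγE.2, ?_⟩, ⟨hγE.2, ?_⟩⟩, htt γ⟩
      · rwa [hw'γ] at hγw'
      · rw [htt]
        exact hγP
    · rintro ⟨δ, ⟨⟨hδP, hδw⟩, hδE⟩, rfl⟩
      refine ⟨⟨hδE.2, ?_⟩, ⟨hδE.2, ?_⟩⟩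
      · rw [hw'γ, htt]
        exact hδw
      · rw [htt]
        exact hδP
  -- Φ(w') ∩ D = σ '' (D \ Φ(w))
  have hT2 : invSet C.pos w' ∩ D = σ '' (D \ invSet C.pos w) := by
    ext γ
    constructor
    · rintro ⟨⟨hγP, hγw'⟩, hγD⟩
      refine ⟨σ γ, ⟨hσD γ hγD, ?_⟩, hσσ γ⟩
      intro hσΦ
      have h1 : -(w (σ γ)) ∈ C.pos := hσΦ.2
      rw [hwσ] at h1
      rw [hw'γ] at hγw'
      exact C.not_pos_and_neg _ h1 hγw'
    · rintro ⟨δ, ⟨hδD, hδnΦ⟩, rfl⟩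
      refine ⟨⟨(hσD δ hδD).1.1, ?_⟩, hσD δ hδD⟩
      rw [hw'σ]
      -- goal : w δ ∈ pos
      rcases C.mem_pos_or (w δ) (hw δ (C.pos_subset hδD.1.1)) with h | h
      · exact h
      · exact absurd ⟨hδD.1.1, h⟩ hδnΦ
  -- σ maps Φ(w) ∩ D into D \ Φ(w)
  have hkey : σ '' (invSet C.pos w ∩ D) ⊆ D \ invSet C.pos w := by
    rintro _ ⟨γ, ⟨hγΦ, hγD⟩, rfl⟩
    refine ⟨hσD γ hγD, ?_⟩
    intro hσΦ
    obtain ⟨c, hcpos, hcβ⟩ := hc γ hγD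
    have h1 : ⟪-(w γ), v⟫ > 0 := hv _ hγΦ.2
    have h2 : ⟪-(w (σ γ)), v⟫ > 0 := hv _ hσΦ.2
    have h3 : w (γ + σ γ) = c • (w β) := by rw [hcβ, map_smul]
    have h4 : ⟪w (γ + σ γ), v⟫ = ⟪w γ, v⟫ + ⟪w (σ γ), v⟫ := by
      rw [map_add, inner_add_left]
    have h5 : 0 < ⟪w β, v⟫ := hv _ hwβ
    rw [h3, real_inner_smul_left] at h4
    rw [inner_neg_left] at h1 h2
    nlinarith
  -- finiteness
  have hfinΦw : (invSet C.pos w).Finite := hposfin.subset (fun x hx => hx.1)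
  have hfinΦw' : (invSet C.pos w').Finite := hposfin.subset (fun x hx => hx.1)
  have hfinD : D.Finite := hposfin.subset (fun x hx => hx.1.1)
  have hfinE : E.Finite := hposfin.subset (fun x hx => hx.1)
  -- decompositions
  have hdecw : invSet C.pos w = (invSet C.pos w ∩ E) ∪ (invSet C.pos w ∩ D) := by
    ext γ
    constructor
    · intro hγ
      rcases hsplit γ hγ.1 with h | h | h
      · exact absurd (h ▸ hγ) hβΦw
      · exact Or.inl ⟨hγ, h⟩
      · exact Or.inr ⟨hγ, h⟩
    · rintro (h | h) <;> exact h.1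
  have hdecw' : invSet C.pos w' = (invSet C.pos w' ∩ E) ∪ ((invSet C.pos w' ∩ D) ∪ {β}) := by
    ext γ
    constructor
    · intro hγ
      rcases hsplit γ hγ.1 with h | h | h
      · exact Or.inr (Or.inr h)
      · exact Or.inl ⟨hγ, h⟩
      · exact Or.inr (Or.inl ⟨hγ, h⟩)
    · rintro (h | h | h)
      · exact h.1
      · exact h.1
      · rw [Set.mem_singleton_iff] at h
        rw [h]
        exact hβΦw'
  -- cardinalities
  have hcard1 : (invSet C.pos w' ∩ E).ncard = (invSet C.pos w ∩ E).ncard := by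
    rw [hT1]
    exact Set.ncard_image_of_injective _ t.injective
  have hcard2 : (invSet C.pos w ∩ D).ncard ≤ (invSet C.pos w' ∩ D).ncard := by
    rw [hT2]
    calc (invSet C.pos w ∩ D).ncard = (σ '' (invSet C.pos w ∩ D)).ncard :=
          (Set.ncard_image_of_injective _ hσinj).symm
    _ ≤ (D \ invSet C.pos w).ncard := by
          exact Set.ncard_le_ncard hkey hfinD.diff
    _ = (σ '' (D \ invSet C.pos w)).ncard :=
          (Set.ncard_image_of_injective _ hσinj).symm
  have d0 : Disjoint (invSet C.pos w ∩ E) (invSet C.pos w ∩ D) := by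
    rw [Set.disjoint_iff_inter_eq_empty]
    ext γ
    simp only [Set.mem_inter_iff, Set.mem_empty_iff_false, iff_false]
    rintro ⟨h1, h2⟩
    exact hED γ h1.2 h2.2
  have hlen1 : invLen C.pos w = (invSet C.pos w ∩ E).ncard + (invSet C.pos w ∩ D).ncard := by
    have heq : invLen C.pos w = ((invSet C.pos w ∩ E) ∪ (invSet C.pos w ∩ D)).ncard := by
      rw [invLen, ← hdecw]
    rw [heq, Set.ncard_union_eq d0 (hfinΦw.inter_of_left E) (hfinΦw.inter_of_left D)]
  have d2 : Disjoint (invSet C.pos w' ∩ D) ({β} : Set V) := by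
    rw [Set.disjoint_singleton_right]
    rintro ⟨h1, h2⟩
    exact hβnotD h2
  have d1 : Disjoint (invSet C.pos w' ∩ E) ((invSet C.pos w' ∩ D) ∪ {β}) := by
    rw [Set.disjoint_union_right]
    constructor
    · rw [Set.disjoint_iff_inter_eq_empty]
      ext γ
      simp only [Set.mem_inter_iff, Set.mem_empty_iff_false, iff_false]
      rintro ⟨h1, h2⟩
      exact hED γ h1.2 h2.2
    · rw [Set.disjoint_singleton_right]
      rintro ⟨h1, h2⟩
      exact hβnotE h2
  have hlen2 : invLen C.pos w' =
      (invSet C.pos w' ∩ E).ncard + ((invSet C.pos w' ∩ D).ncard + 1) := by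
    have heq : invLen C.pos w' =
        ((invSet C.pos w' ∩ E) ∪ ((invSet C.pos w' ∩ D) ∪ {β})).ncard := by
      rw [invLen, ← hdecw']
    rw [heq, Set.ncard_union_eq d1 (hfinΦw'.inter_of_left E)
        ((hfinΦw'.inter_of_left D).union (Set.finite_singleton β)),
      Set.ncard_union_eq d2 (hfinΦw'.inter_of_left D) (Set.finite_singleton β),
      Set.ncard_singleton]
  omega

end RootSystemCtx
end Aux2

section Aux3

variable {V : Type*} [NormedAddCommGroup V] [InnerProductSpace ℝ V] [FiniteDimensional ℝ V]

namespace RootSystemCtx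

variable (C : RootSystemCtx V)

lemma step_nonneg_pos {v : V} (hv : ∀ γ ∈ C.pos, 0 < ⟪γ, v⟫)
    {l : V} (hlP : ∀ β ∈ C.pos, 0 ≤ ⟪l, β⟫)
    {b : V ≃ₗᵢ[ℝ] V} (hb : ∀ γ ∈ C.roots, b γ ∈ C.roots)
    {β : V} (hβ : β ∈ C.pos)
    (hlen : invLen C.pos b < invLen C.pos (b * reflRoot β)) :
    0 ≤ ⟪b l - (b * reflRoot β) l, v⟫ := by
  have hβroot : β ∈ C.roots := C.pos_subset hβ
  have hbβroot : b β ∈ C.roots := hb β hβroot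
  rcases C.mem_pos_or (b β) hbβroot with hpos | hneg
  · have hc : 0 ≤ 2 * ⟪l, β⟫ / ⟪β, β⟫ :=
      div_nonneg (by linarith [hlP β hβ]) (le_of_lt (C.inner_self_pos_of_root hβroot))
    have hval : b l - (b * reflRoot β) l = (2 * ⟪l, β⟫ / ⟪β, β⟫) • (b β) := by
      show b l - b (reflRoot β l) = _
      rw [reflRoot_apply, map_sub, map_smul]
      abel
    rw [hval, real_inner_smul_left]
    exact mul_nonneg hc (le_of_lt (hv _ hpos))
  · exfalso
    have hb' : ∀ γ ∈ C.roots, (b * reflRoot β) γ ∈ C.roots := by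
      intro γ hγ
      exact hb _ (C.reflect_mem β hβroot γ hγ)
    have hbβ : (b * reflRoot β) β ∈ C.pos := by
      show b (reflRoot β β) ∈ C.pos
      rw [reflRoot_self (C.nonzero β hβroot), map_neg]
      exact hneg
    have hlt := C.invLen_lt_of_pos hv hb' hβ hbβ
    have hcomp : (b * reflRoot β) * reflRoot β = b := by
      rw [mul_assoc, reflRoot_mul_self, mul_one]
    rw [hcomp] at hlt
    omega

lemma step_nonneg {v : V} (hv : ∀ γ ∈ C.pos, 0 < ⟪γ, v⟫)
    {l : V} (hlP : ∀ β ∈ C.pos, 0 ≤ ⟪l, β⟫)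
    {b : V ≃ₗᵢ[ℝ] V} (hb : ∀ γ ∈ C.roots, b γ ∈ C.roots)
    {α : V} (hαroot : α ∈ C.roots)
    (hlen : invLen C.pos b < invLen C.pos (b * reflRoot α)) :
    0 ≤ ⟪b l - (b * reflRoot α) l, v⟫ := by
  rcases C.mem_pos_or α hαroot with h | h
  · exact C.step_nonneg_pos hv hlP hb h hlen
  · have h2 : reflRoot (-α) = reflRoot α := reflRoot_neg α
    rw [← h2] at hlen ⊢
    exact C.step_nonneg_pos hv hlP hb h hlen

lemma chain_nonneg {v : V} (hv : ∀ γ ∈ C.pos, 0 < ⟪γ, v⟫)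
    {l : V} (hlP : ∀ β ∈ C.pos, 0 ≤ ⟪l, β⟫)
    {x y : V ≃ₗᵢ[ℝ] V} (h : bruhatLE C.roots C.pos x y)
    (hx : ∀ γ ∈ C.roots, x γ ∈ C.roots) :
    (∀ γ ∈ C.roots, y γ ∈ C.roots) ∧ 0 ≤ ⟪x l - y l, v⟫ := by
  induction h with
  | refl => exact ⟨hx, by simp⟩
  | @tail b c hxb hbc ih =>
    obtain ⟨hb, hble⟩ := ih
    obtain ⟨⟨α, hαroot, rfl⟩, hlen⟩ := hbc
    constructor
    · intro γ hγ
      exact hb _ (C.reflect_mem α hαroot γ hγ)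
    · have hstep := C.step_nonneg hv hlP hb hαroot hlen
      have hsum : x l - (b * reflRoot α) l = (x l - b l) + (b l - (b * reflRoot α) l) := by
        abel
      rw [hsum, inner_add_left]
      linarith

end RootSystemCtx
end Aux3

/-- if `Δ⁺ = Φ_{w_1} ⊔ ⋯ ⊔ Φ_{w_k}` and `u ∈ W` satisfies `w_i ≤ w_i u` for all
`i`, then for any dominant integral weight `λ`, the element `μ_λ = λ - uλ` is neither a root
nor a nonzero scalar multiple of a root. -/
theorem statement5 {V : Type*} [NormedAddCommGroup V] [InnerProductSpace ℝ V]
    [FiniteDimensional ℝ V] (C : RootSystemCtx V) (k : ℕ)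
    (w : Fin k → (V ≃ₗᵢ[ℝ] V)) (hw : ∀ i, w i ∈ C.weylGroup)
    (hcover : C.pos = ⋃ i, invSet C.pos (w i))
    (hdisj : ∀ i j, i ≠ j → Disjoint (invSet C.pos (w i)) (invSet C.pos (w j)))
    (u : V ≃ₗᵢ[ℝ] V) (hu : u ∈ C.weylGroup)
    (hle : ∀ i, bruhatLE C.roots C.pos (w i) (w i * u))
    (l : V) (hl : C.IsDominant l) :
    ∀ α ∈ C.roots, ∀ t : ℝ, t ≠ 0 → l - u l ≠ t • α := by
  obtain ⟨v, hv⟩ := C.exists_pos_functional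
  have hlP : ∀ β ∈ C.pos, 0 ≤ ⟪l, β⟫ := C.dominant_inner_nonneg hv hl
  have key : ∀ (β : V) (s : ℝ), β ∈ C.pos → s ≠ 0 → l - u l ≠ s • β := by
    intro β s hβ hs heq
    have hβroot : β ∈ C.roots := C.pos_subset hβ
    have hβ0 : β ≠ 0 := C.nonzero β hβroot
    have hchain : ∀ i, 0 ≤ s * ⟪w i β, v⟫ := by
      intro i
      have hstab := C.weyl_maps_roots (hw i)
      have hch := (C.chain_nonneg hv hlP (hle i) hstab).2
      have hval : (w i) l - (w i * u) l = s • (w i β) := by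
        show (w i) l - (w i) (u l) = _
        rw [← map_sub, heq, map_smul]
      rw [hval, real_inner_smul_left] at hch
      exact hch
    rcases lt_or_gt_of_ne hs with hneg | hpos
    · -- s < 0 : pair with l itself
      have h1 : 0 ≤ ⟪l - u l, l⟫ := by
        have h2 : ⟪u l, l⟫ ≤ ‖l‖ * ‖l‖ := by
          calc ⟪u l, l⟫ ≤ ‖u l‖ * ‖l‖ := real_inner_le_norm _ _
          _ = ‖l‖ * ‖l‖ := by rw [u.norm_map]
        rw [inner_sub_left, real_inner_self_eq_norm_mul_norm]
        linarith
      rw [heq, real_inner_smul_left] at h1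
      have h3 : ⟪β, l⟫ = 0 := by
        have h4 : 0 ≤ ⟪l, β⟫ := hlP β hβ
        rw [real_inner_comm] at h4
        nlinarith
      have h5 : ⟪u l, l⟫ = ‖u l‖ * ‖l‖ := by
        have h6 : ⟪l - u l, l⟫ = 0 := by
          rw [heq, real_inner_smul_left, h3, mul_zero]
        rw [inner_sub_left, real_inner_self_eq_norm_mul_norm] at h6
        rw [u.norm_map]
        linarith
      have h7 := inner_eq_norm_mul_iff_real.mp h5
      rw [u.norm_map] at h7
      have hul : u l = l := by
        by_cases hl0 : l = 0
        · rw [hl0, map_zero]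
        · have hn : ‖l‖ ≠ 0 := norm_ne_zero_iff.mpr hl0
          exact smul_right_injective V hn h7
      rw [hul, sub_self] at heq
      rcases smul_eq_zero.mp heq.symm with h | h
      · exact hs h
      · exact hβ0 h
    · -- s > 0 : every w i β is positive, contradicting the covering
      have hall : ∀ i, w i β ∈ C.pos := by
        intro i
        have hroot : w i β ∈ C.roots := C.weyl_maps_roots (hw i) β hβroot
        rcases C.mem_pos_or _ hroot with h | h
        · exact h
        · exfalso
          have h8 := hchain i
          have hvn : ⟪w i β, v⟫ < 0 := by
            have h9 := hv _ h
            rw [inner_neg_left] at h9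
            linarith
          nlinarith
      have hβcov : β ∈ ⋃ i, invSet C.pos (w i) := by rw [← hcover]; exact hβ
      rw [Set.mem_iUnion] at hβcov
      obtain ⟨i, hi⟩ := hβcov
      exact C.not_pos_and_neg _ (hall i) hi.2
  intro α hα t ht heq
  rcases C.mem_pos_or α hα with h | h
  · exact key α t h ht heq
  · apply key (-α) (-t) h (neg_ne_zero.mpr ht)
    rw [heq, smul_neg, neg_smul, neg_neg]

end
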